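/- For any invertible (n+p)×(n+p) matrix A whose top-left n×n block of A is considered: det(A^{-1}) · det((A)_{ij}, 1 ≤ i,j ≤ n) = det((A^{-1})_{kl}, n+1 ≤ k,l ≤ n+p). -/
import Mathlib

open Matrix

/-- Jacobi's identity: for an invertible `(n+p)×(n+p)` matrix `A`,
`det(A⁻¹) · det(top-left n×n block of A) = det(bottom-right p×p block of A⁻¹)`. -/
theorem stmt_7 {K : Type*} [Field K] (n p : ℕ)
    (A : Matrix (Fin (n + p)) (Fin (n + p)) K) (hA : IsUnit A.det) :
    A⁻¹.det * (A.submatrix (Fin.castAdd p) (Fin.castAdd p)).det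
      = (A⁻¹.submatrix (Fin.natAdd n) (Fin.natAdd n)).det := by
  set e : Fin n ⊕ Fin p ≃ Fin (n + p) := finSumFinEquiv with he
  set M := A.submatrix e e with hM
  set N := (A⁻¹).submatrix e e with hN
  have hMN : M * N = 1 := by
    rw [hM, hN, submatrix_mul_equiv, mul_nonsing_inv A hA, submatrix_one_equiv]
  have hblocks : M * fromBlocks 1 (N.toBlocks₁₂) 0 (N.toBlocks₂₂)
      = fromBlocks M.toBlocks₁₁ 0 M.toBlocks₂₁ 1 := by
    have h1 : (fromBlocks M.toBlocks₁₁ M.toBlocks₁₂ M.toBlocks₂₁ M.toBlocks₂₂) *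
        (fromBlocks N.toBlocks₁₁ N.toBlocks₁₂ N.toBlocks₂₁ N.toBlocks₂₂) = 1 := by
      rw [fromBlocks_toBlocks, fromBlocks_toBlocks, hMN]
    rw [← fromBlocks_one] at h1
    rw [fromBlocks_multiply] at h1
    have h12 : M.toBlocks₁₁ * N.toBlocks₁₂ + M.toBlocks₁₂ * N.toBlocks₂₂ = 0 :=
      congrArg Matrix.toBlocks₁₂ h1
    have h22 : M.toBlocks₂₁ * N.toBlocks₁₂ + M.toBlocks₂₂ * N.toBlocks₂₂ = 1 :=
      congrArg Matrix.toBlocks₂₂ h1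
    conv_lhs => rw [← fromBlocks_toBlocks M]
    rw [fromBlocks_multiply]
    simp [h12, h22]
  have hdet := congrArg Matrix.det hblocks
  rw [det_mul, det_fromBlocks_zero₂₁, det_fromBlocks_zero₁₂, det_one, det_one,
    one_mul, mul_one] at hdet
  have hMdet : M.det = A.det := det_submatrix_equiv_self e A
  have h11 : M.toBlocks₁₁ = A.submatrix (Fin.castAdd p) (Fin.castAdd p) := by
    ext i j; simp [Matrix.toBlocks₁₁, hM, he]
  have h22' : N.toBlocks₂₂ = (A⁻¹).submatrix (Fin.natAdd n) (Fin.natAdd n) := by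
    ext i j; simp [Matrix.toBlocks₂₂, hN, he]
  have hAinv : A⁻¹.det = (A.det)⁻¹ := by
    rw [det_nonsing_inv, Ring.inverse_eq_inv']
  rw [← h22', ← h11, ← hdet, hMdet, hAinv, ← mul_assoc]
  rw [inv_mul_cancel₀ hA.ne_zero, one_mul]
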